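/- Let g : ℝ → ℝ be a C¹ nonnegative function of period 1. Then ∫₀¹ g(x)³ dx ≤ C (‖g'‖_{L²[0,1]}^{4/3} ‖g‖_{L¹[0,1]}^{5/3} + ‖g‖_{L¹[0,1]}³) for some universal constant C > 0. -/

import Mathlib

open intervalIntegral

lemma aux_amgm (ε a b : ℝ) (hε : 0 < ε) : |2 * a * b| ≤ ε * a ^ 2 + ε⁻¹ * b ^ 2 := by
  have hεi : 0 < ε⁻¹ := inv_pos.2 hε
  rw [abs_le]
  constructor
  · have h1 : 0 ≤ ε ^ 2 * a ^ 2 + b ^ 2 + 2 * a * b * ε := by nlinarith [sq_nonneg (ε * a + b)]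
    have h2 : 0 ≤ (ε ^ 2 * a ^ 2 + b ^ 2 + 2 * a * b * ε) * ε⁻¹ := mul_nonneg h1 hεi.le
    have h3 : (ε ^ 2 * a ^ 2 + b ^ 2 + 2 * a * b * ε) * ε⁻¹
        = ε * a ^ 2 + ε⁻¹ * b ^ 2 + 2 * a * b := by
      field_simp
    linarith [h3 ▸ h2]
  · have h1 : 0 ≤ ε ^ 2 * a ^ 2 + b ^ 2 - 2 * a * b * ε := by nlinarith [sq_nonneg (ε * a - b)]
    have h2 : 0 ≤ (ε ^ 2 * a ^ 2 + b ^ 2 - 2 * a * b * ε) * ε⁻¹ := mul_nonneg h1 hεi.le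
    have h3 : (ε ^ 2 * a ^ 2 + b ^ 2 - 2 * a * b * ε) * ε⁻¹
        = ε * a ^ 2 + ε⁻¹ * b ^ 2 - 2 * a * b := by
      field_simp
    linarith [h3 ▸ h2]

set_option maxHeartbeats 1000000 in
theorem stmt_12 :
    ∃ C : ℝ, 0 < C ∧ ∀ g : ℝ → ℝ, ContDiff ℝ 1 g → (∀ x : ℝ, g (x + 1) = g x) →
      (∀ x : ℝ, 0 ≤ g x) →
      (∫ x in (0:ℝ)..1, (g x) ^ 3) ≤
        C * ((Real.sqrt (∫ x in (0:ℝ)..1, (deriv g x) ^ 2)) ^ ((4:ℝ)/3)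
              * (∫ x in (0:ℝ)..1, g x) ^ ((5:ℝ)/3)
            + (∫ x in (0:ℝ)..1, g x) ^ 3) := by
  refine ⟨4, by norm_num, ?_⟩
  intro g hg _hper hpos
  have hgc : Continuous g := hg.continuous
  have hg'c : Continuous (deriv g) := hg.continuous_deriv le_rfl
  set m := ∫ x in (0:ℝ)..1, g x with hm
  set D2 := ∫ x in (0:ℝ)..1, (deriv g x) ^ 2 with hD2def
  have hD2nn : 0 ≤ D2 := intervalIntegral.integral_nonneg (by norm_num) (fun x _ => sq_nonneg _)
  obtain ⟨x₁, hx₁, hmax'⟩ := isCompact_Icc.exists_isMaxOn (Set.nonempty_Icc.2 (by norm_num : (0:ℝ) ≤ 1)) hgc.continuousOn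
  obtain ⟨x₀, hx₀, hmin'⟩ := isCompact_Icc.exists_isMinOn (Set.nonempty_Icc.2 (by norm_num : (0:ℝ) ≤ 1)) hgc.continuousOn
  have hmax : ∀ x ∈ Set.Icc (0:ℝ) 1, g x ≤ g x₁ := fun x hx => isMaxOn_iff.1 hmax' x hx
  have hmin : ∀ x ∈ Set.Icc (0:ℝ) 1, g x₀ ≤ g x := fun x hx => isMinOn_iff.1 hmin' x hx
  set S := g x₁ with hSdef
  have hSnn : 0 ≤ S := hpos x₁
  have hx0nn : 0 ≤ g x₀ := hpos x₀
  have hmnn : 0 ≤ m := intervalIntegral.integral_nonneg (by norm_num) (fun x _ => hpos x)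
  have hx0m : g x₀ ≤ m := by
    have h := intervalIntegral.integral_mono_on (μ := MeasureTheory.volume) (by norm_num : (0:ℝ) ≤ 1)
      (intervalIntegrable_const : IntervalIntegrable (fun _ => g x₀) MeasureTheory.volume 0 1)
      (hgc.intervalIntegrable _ _)
      (fun x hx => hmin x hx)
    simpa using h
  -- I ≤ S^2 * m
  have hI : (∫ x in (0:ℝ)..1, g x ^ 3) ≤ S ^ 2 * m := by
    have h := intervalIntegral.integral_mono_on (μ := MeasureTheory.volume) (by norm_num : (0:ℝ) ≤ 1)
      ((hgc.pow 3).intervalIntegrable _ _) ((continuous_const.mul hgc).intervalIntegrable _ _)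
      (fun x hx => by
        have h1 := hmax x hx; have h2 := hpos x
        show g x ^ 3 ≤ S ^ 2 * g x
        have h3 : g x ^ 2 ≤ S ^ 2 := by nlinarith
        nlinarith [mul_le_mul_of_nonneg_left h3 h2])
    calc (∫ x in (0:ℝ)..1, g x ^ 3) ≤ ∫ x in (0:ℝ)..1, S ^ 2 * g x := h
      _ = S ^ 2 * m := by rw [intervalIntegral.integral_const_mul]
  have hT1nn : 0 ≤ (Real.sqrt D2) ^ ((4:ℝ)/3) * m ^ ((5:ℝ)/3) :=
    mul_nonneg (Real.rpow_nonneg (Real.sqrt_nonneg _) _) (Real.rpow_nonneg hmnn _)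
  rcases eq_or_lt_of_le hmnn with hm0 | hm0
  · have : (∫ x in (0:ℝ)..1, g x ^ 3) ≤ 0 := by
      rw [← hm0] at hI; simpa using hI
    nlinarith [hT1nn, pow_nonneg hmnn 3]
  rcases eq_or_lt_of_le hSnn with hS0 | hS0
  · have : (∫ x in (0:ℝ)..1, g x ^ 3) ≤ 0 := by
      have : S ^ 2 * m = 0 := by rw [← hS0]; ring
      linarith [hI, this]
    nlinarith [hT1nn, pow_nonneg hmnn 3]
  -- FTC for g^2
  have hderiv : ∀ x ∈ Set.uIcc x₀ x₁, HasDerivAt (fun y => g y ^ 2) (2 * g x * deriv g x) x := by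
    intro x _
    have hd := ((hg.differentiable one_ne_zero) x).hasDerivAt
    have := hd.fun_pow 2
    simpa [mul_comm, mul_assoc, mul_left_comm] using this
  have hcont2 : Continuous fun x => 2 * g x * deriv g x :=
    (continuous_const.mul hgc).mul hg'c
  have hftc : (∫ x in x₀..x₁, 2 * g x * deriv g x) = S ^ 2 - g x₀ ^ 2 :=
    intervalIntegral.integral_eq_sub_of_hasDerivAt hderiv (hcont2.intervalIntegrable _ _)
  -- bound |∫ x₀..x₁| by ∫ 0..1 of abs
  have habs : S ^ 2 - g x₀ ^ 2 ≤ ∫ x in (0:ℝ)..1, |2 * g x * deriv g x| := by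
    rw [← hftc]
    have hai : IntervalIntegrable (fun x => |2 * g x * deriv g x|) MeasureTheory.volume 0 1 :=
      (hcont2.abs.intervalIntegrable _ _)
    have hnn : (0:ℝ → ℝ) ≤ᵐ[MeasureTheory.volume.restrict (Set.Ioc (0:ℝ) 1)]
        fun x => |2 * g x * deriv g x| := .of_forall fun x => abs_nonneg _
    rcases le_total x₀ x₁ with hle | hle
    · calc (∫ x in x₀..x₁, 2 * g x * deriv g x)
          ≤ |∫ x in x₀..x₁, 2 * g x * deriv g x| := le_abs_self _
        _ ≤ ∫ x in x₀..x₁, |2 * g x * deriv g x| :=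
            intervalIntegral.abs_integral_le_integral_abs hle
        _ ≤ ∫ x in (0:ℝ)..1, |2 * g x * deriv g x| :=
            intervalIntegral.integral_mono_interval hx₀.1 hle hx₁.2 hnn hai
    · calc (∫ x in x₀..x₁, 2 * g x * deriv g x)
          ≤ |∫ x in x₀..x₁, 2 * g x * deriv g x| := le_abs_self _
        _ = |∫ x in x₁..x₀, 2 * g x * deriv g x| := by
            rw [intervalIntegral.integral_symm, abs_neg]
        _ ≤ ∫ x in x₁..x₀, |2 * g x * deriv g x| :=
            intervalIntegral.abs_integral_le_integral_abs hle
        _ ≤ ∫ x in (0:ℝ)..1, |2 * g x * deriv g x| :=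
            intervalIntegral.integral_mono_interval hx₁.1 hle hx₀.2 hnn hai
  -- pointwise AM-GM and monotonicity
  have hJ : (∫ x in (0:ℝ)..1, g x ^ 2) ≤ S * m := by
    have h := intervalIntegral.integral_mono_on (μ := MeasureTheory.volume) (by norm_num : (0:ℝ) ≤ 1)
      ((hgc.pow 2).intervalIntegrable _ _) ((continuous_const.mul hgc).intervalIntegrable _ _)
      (fun x hx => by
        have h1 := hmax x hx; have h2 := hpos x
        show g x ^ 2 ≤ S * g x
        nlinarith)
    calc (∫ x in (0:ℝ)..1, g x ^ 2) ≤ ∫ x in (0:ℝ)..1, S * g x := h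
      _ = S * m := by rw [intervalIntegral.integral_const_mul]
  clear_value m D2 S
  set ε := S / (2 * m) with hεdef
  have hεpos : 0 < ε := div_pos hS0 (by linarith)
  have hCS : (∫ x in (0:ℝ)..1, |2 * g x * deriv g x|) ≤ ε * (S * m) + ε⁻¹ * D2 := by
    have h := intervalIntegral.integral_mono_on (μ := MeasureTheory.volume) (by norm_num : (0:ℝ) ≤ 1)
      (hcont2.abs.intervalIntegrable _ _)
      (((continuous_const.mul (hgc.pow 2)).add
        (continuous_const.mul (hg'c.pow 2))).intervalIntegrable _ _)
      (fun x _ => aux_amgm ε (g x) (deriv g x) hεpos)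
    have heq : (∫ x in (0:ℝ)..1, (ε * g x ^ 2 + ε⁻¹ * (deriv g x) ^ 2))
        = ε * (∫ x in (0:ℝ)..1, g x ^ 2) + ε⁻¹ * D2 := by
      rw [intervalIntegral.integral_add (f := fun x => ε * g x ^ 2) (g := fun x => ε⁻¹ * deriv g x ^ 2)
          ((continuous_const.mul (hgc.pow 2)).intervalIntegrable _ _)
          ((continuous_const.mul (hg'c.pow 2)).intervalIntegrable _ _),
        intervalIntegral.integral_const_mul, intervalIntegral.integral_const_mul, ← hD2def]
    have h2 : ε * (∫ x in (0:ℝ)..1, g x ^ 2) ≤ ε * (S * m) :=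
      mul_le_mul_of_nonneg_left hJ hεpos.le
    calc (∫ x in (0:ℝ)..1, |2 * g x * deriv g x|)
        ≤ ∫ x in (0:ℝ)..1, (ε * g x ^ 2 + ε⁻¹ * (deriv g x) ^ 2) := h
      _ = ε * (∫ x in (0:ℝ)..1, g x ^ 2) + ε⁻¹ * D2 := heq
      _ ≤ ε * (S * m) + ε⁻¹ * D2 := by linarith
  have hkey : S ^ 2 ≤ m ^ 2 + ε * (S * m) + ε⁻¹ * D2 := by
    nlinarith [habs, hCS, hx0nn, hx0m]
  -- turn into S^3 ≤ 2 m^2 S + 4 m D2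
  have e1 : ε * (S * m) = S ^ 2 / 2 := by
    rw [hεdef]; field_simp
  have e2 : ε⁻¹ * D2 = 2 * m * D2 / S := by
    rw [hεdef, inv_div]; ring
  rw [e1, e2] at hkey
  have hS3 : S ^ 3 ≤ 2 * m ^ 2 * S + 4 * m * D2 := by
    have h := mul_le_mul_of_nonneg_right hkey hS0.le
    have h2 : 2 * m * D2 / S * S = 2 * m * D2 := div_mul_cancel₀ _ hS0.ne'
    nlinarith [h, h2]
  rcases le_total (4 * m * D2) (2 * m ^ 2 * S) with hc | hc
  · -- S^2 ≤ 4 m^2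
    have hS2 : S ^ 2 ≤ 4 * m ^ 2 := by nlinarith [hS3, hc, hS0]
    have : S ^ 2 * m ≤ 4 * m ^ 3 := by nlinarith [hS2, hmnn]
    nlinarith [hI, this, hT1nn]
  · -- S^3 ≤ 8 m D2
    have hS3' : S ^ 3 ≤ 8 * m * D2 := by linarith
    have h1 : ((S:ℝ) ^ 3) ^ ((2:ℝ)/3) ≤ ((8:ℝ) * m * D2) ^ ((2:ℝ)/3) :=
      Real.rpow_le_rpow (by positivity) hS3' (by norm_num)
    have hL : ((S:ℝ) ^ 3) ^ ((2:ℝ)/3) = S ^ 2 := by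
      rw [← Real.rpow_natCast S 3, ← Real.rpow_mul hSnn]
      rw [show ((3:ℕ):ℝ) * ((2:ℝ)/3) = 2 by norm_num, Real.rpow_two]
    have h8 : (8:ℝ) ^ ((2:ℝ)/3) = 4 := by
      rw [show (8:ℝ) = 2 ^ (3:ℕ) by norm_num, ← Real.rpow_natCast 2 3,
        ← Real.rpow_mul (by norm_num : (0:ℝ) ≤ 2)]
      rw [show ((3:ℕ):ℝ) * ((2:ℝ)/3) = 2 by norm_num, Real.rpow_two]
      norm_num
    have hR : ((8:ℝ) * m * D2) ^ ((2:ℝ)/3) = 4 * m ^ ((2:ℝ)/3) * D2 ^ ((2:ℝ)/3) := by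
      rw [Real.mul_rpow (by positivity) hD2nn, Real.mul_rpow (by norm_num) hmnn, h8]
    have hsq : (Real.sqrt D2) ^ ((4:ℝ)/3) = D2 ^ ((2:ℝ)/3) := by
      rw [Real.sqrt_eq_rpow, ← Real.rpow_mul hD2nn]
      norm_num
    have hm53 : m ^ ((2:ℝ)/3) * m = m ^ ((5:ℝ)/3) := by
      calc m ^ ((2:ℝ)/3) * m = m ^ ((2:ℝ)/3) * m ^ (1:ℝ) := by rw [Real.rpow_one]
        _ = m ^ ((2:ℝ)/3 + 1) := (Real.rpow_add hm0 _ _).symm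
        _ = m ^ ((5:ℝ)/3) := by norm_num
    have hS2 : S ^ 2 ≤ 4 * m ^ ((2:ℝ)/3) * D2 ^ ((2:ℝ)/3) := by
      rw [← hL, ← hR]; exact h1
    have hfin : S ^ 2 * m ≤ 4 * ((Real.sqrt D2) ^ ((4:ℝ)/3) * m ^ ((5:ℝ)/3)) := by
      have := mul_le_mul_of_nonneg_right hS2 hmnn
      calc S ^ 2 * m ≤ 4 * m ^ ((2:ℝ)/3) * D2 ^ ((2:ℝ)/3) * m := this
        _ = 4 * (D2 ^ ((2:ℝ)/3) * (m ^ ((2:ℝ)/3) * m)) := by ring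
        _ = 4 * ((Real.sqrt D2) ^ ((4:ℝ)/3) * m ^ ((5:ℝ)/3)) := by rw [hsq, hm53]
    nlinarith [hI, hfin, pow_nonneg hmnn 3]
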